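/- For m ≥ 2 and θ' := mπ/2 − θ ∈ (0, π/2], the quantity (m−1)·sin²(θ'/(m−1)) − m·sin²(θ'/m) is non-negative. -/

import Mathlib

open Real

/-- `sin x ^ 2 / x` is monotone on `(0, π/4]`. -/
lemma phi_mono {x y : ℝ} (hx : 0 < x) (hxy : x ≤ y) (hy : y ≤ π / 4) :
    Real.sin x ^ 2 / x ≤ Real.sin y ^ 2 / y := by
  have hpi : π ≤ 3.15 := by linarith [Real.pi_lt_d2]
  set f : ℝ → ℝ := fun t => Real.sin t ^ 2 / t with hf
  have hder : ∀ t : ℝ, 0 < t →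
      HasDerivAt f ((2 * Real.sin t * Real.cos t * t - Real.sin t ^ 2 * 1) / t ^ 2) t := by
    intro t ht
    have h1 : HasDerivAt (fun s => Real.sin s ^ 2) (2 * Real.sin t * Real.cos t) t := by
      have := (Real.hasDerivAt_sin t).fun_pow 2
      simpa [mul_comm, mul_assoc, mul_left_comm] using this
    exact h1.div (hasDerivAt_id t) ht.ne'
  have hmono : MonotoneOn f (Set.Icc x y) := by
    apply monotoneOn_of_deriv_nonneg (convex_Icc x y)
    · apply ContinuousOn.div
      · exact (Real.continuous_sin.pow 2).continuousOn
      · exact continuousOn_id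
      · intro t ht
        exact ne_of_gt (lt_of_lt_of_le hx ht.1)
    · intro t ht
      rw [interior_Icc] at ht
      exact ((hder t (hx.trans ht.1)).differentiableAt).differentiableWithinAt
    · intro t ht
      rw [interior_Icc] at ht
      have ht0 : 0 < t := hx.trans ht.1
      rw [(hder t ht0).deriv]
      have ht4 : t ≤ π / 4 := le_of_lt (lt_of_lt_of_le ht.2 hy)
      have hs1 : Real.sin t ≤ t := Real.sin_le ht0.le
      have hs0 : 0 ≤ Real.sin t :=
        Real.sin_nonneg_of_nonneg_of_le_pi ht0.le (by linarith)
      have hc : 1 - t ^ 2 / 2 ≤ Real.cos t := Real.one_sub_sq_div_two_le_cos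
      have ht1 : t ^ 2 ≤ 1 := by nlinarith
      have hnum : 0 ≤ 2 * Real.sin t * Real.cos t * t - Real.sin t ^ 2 * 1 := by
        nlinarith [mul_le_mul_of_nonneg_left hs1 hs0,
          mul_le_mul_of_nonneg_left hc (by positivity : (0:ℝ) ≤ 2 * Real.sin t * t),
          mul_nonneg (mul_nonneg hs0 ht0.le) (sub_nonneg.2 ht1)]
      positivity
  have := hmono ⟨le_refl x, hxy⟩ ⟨hxy, le_refl y⟩ hxy
  simpa [hf] using this

/-- On `[π/4, π/2]`, `sin t ^ 2 ≥ 2 t / π` (denominator-cleared form). -/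
lemma sin_sq_ge {t : ℝ} (h1 : π / 4 ≤ t) (h2 : t ≤ π / 2) :
    2 * t ≤ π * Real.sin t ^ 2 := by
  have hpi : 0 < π := Real.pi_pos
  have h := Real.sin_le_mul (x := π / 2 - 2 * t) (by linarith) (by linarith)
  rw [Real.sin_pi_div_two_sub] at h
  have h' : π * Real.cos (2 * t) ≤ 2 * (π / 2 - 2 * t) := by
    calc π * Real.cos (2 * t) ≤ π * (2 / π * (π / 2 - 2 * t)) :=
          mul_le_mul_of_nonneg_left h hpi.le
      _ = 2 * (π / 2 - 2 * t) := by field_simp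
  have hsq : Real.sin t ^ 2 = 1 / 2 - Real.cos (2 * t) / 2 := Real.sin_sq_eq_half_sub t
  rw [hsq]
  nlinarith [h']

/-- For m ≥ 2 and θ' := mπ/2 − θ ∈ (0, π/2], the quantity
(m−1)·sin²(θ'/(m−1)) − m·sin²(θ'/m) is non-negative. -/
theorem sin_sq_boundary_ineq (m : ℕ) (hm : 2 ≤ m) (θ : ℝ)
    (hθ₁ : ((m : ℝ) - 1) * π / 2 ≤ θ) (hθ₂ : θ < m * π / 2) :
    0 ≤ ((m : ℝ) - 1) * Real.sin ((m * π / 2 - θ) / ((m : ℝ) - 1)) ^ 2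
        - m * Real.sin ((m * π / 2 - θ) / m) ^ 2 := by
  have hpi : 0 < π := Real.pi_pos
  have hM : (2 : ℝ) ≤ (m : ℝ) := by exact_mod_cast hm
  set M : ℝ := (m : ℝ) with hMdef
  set T : ℝ := M * π / 2 - θ with hTdef
  have hT0 : 0 < T := by simp only [hTdef]; linarith
  have hTle : T ≤ π / 2 := by simp only [hTdef]; nlinarith
  have hM1 : (1 : ℝ) ≤ M - 1 := by linarith
  have hM0 : 0 < M := by linarith
  have hM10 : 0 < M - 1 := by linarith
  set a : ℝ := T / M with hadef
  set b : ℝ := T / (M - 1) with hbdef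
  have ha0 : 0 < a := div_pos hT0 hM0
  have hb0 : 0 < b := div_pos hT0 hM10
  have hab : a ≤ b := div_le_div_of_nonneg_left hT0.le hM10 (by linarith)
  have ha4 : a ≤ π / 4 := by
    rw [hadef, div_le_iff₀ hM0]
    nlinarith
  have hb2 : b ≤ π / 2 := by
    rw [hbdef, div_le_iff₀ hM10]
    nlinarith
  have key : Real.sin a ^ 2 / a ≤ Real.sin b ^ 2 / b := by
    rcases le_or_gt b (π / 4) with hb4 | hb4
    · exact phi_mono ha0 hab hb4
    · have h1 : Real.sin a ^ 2 / a ≤ 2 / π := by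
        have h := phi_mono ha0 ha4 (le_refl (π / 4))
        have hval : Real.sin (π / 4) ^ 2 / (π / 4) = 2 / π := by
          rw [Real.sin_pi_div_four]
          rw [div_pow, Real.sq_sqrt (by norm_num : (2:ℝ) ≥ 0)]
          field_simp
          ring
        rw [hval] at h
        exact h
      have h2 : 2 / π ≤ Real.sin b ^ 2 / b := by
        rw [div_le_div_iff₀ hpi hb0]
        nlinarith [sin_sq_ge hb4.le hb2]
      linarith
  have hMa : M * Real.sin a ^ 2 = T * (Real.sin a ^ 2 / a) := by
    rw [hadef]; field_simp
  have hMb : (M - 1) * Real.sin b ^ 2 = T * (Real.sin b ^ 2 / b) := by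
    rw [hbdef]; field_simp
  have hgoal : M * Real.sin a ^ 2 ≤ (M - 1) * Real.sin b ^ 2 := by
    rw [hMa, hMb]
    exact mul_le_mul_of_nonneg_left key hT0.le
  have hea : (M * π / 2 - θ) / M = a := rfl
  have heb : (M * π / 2 - θ) / (M - 1) = b := rfl
  simp only [hMdef] at *
  linarith
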